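/- Let t: G∘G ⟹ G∘G satisfy the QYBE and define t⁽ⁿ⁾ inductively as before. Then for all l ≥ 2 and p ≥ 1: Gᵖ((t⁽ˡ⁻¹⁾)_G) ∘ t⁽ᵖ⁺ˡ⁾ = t⁽ᵖ⁺ˡ⁾ ∘ Gᵖ⁻¹((t⁽ˡ⁻¹⁾)_{G²}). -/

import Mathlib

open CategoryTheory

variable {A : Type*} [Category A]

/-- `gpow G n M` is the `n`-th power `Gⁿ M` of the endofunctor `G` applied to `M`. -/
def gpow (Gf : A ⥤ A) : ℕ → A → A
  | 0, M => M
  | n+1, M => gpow Gf n (Gf.obj M)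

/-- `gmap G n f = Gⁿ(f)`. -/
def gmap (Gf : A ⥤ A) : (n : ℕ) → {X Y : A} → (X ⟶ Y) → (gpow Gf n X ⟶ gpow Gf n Y)
  | 0, _, _, f => f
  | n+1, _, _, f => gmap Gf n (Gf.map f)

lemma gpow_succ_out (Gf : A ⥤ A) : ∀ (n : ℕ) (M : A), gpow Gf (n+1) M = Gf.obj (gpow Gf n M)
  | 0, _ => rfl
  | n+1, M => gpow_succ_out Gf n (Gf.obj M)

lemma gpow_add (Gf : A ⥤ A) : ∀ (a b : ℕ) (M : A), gpow Gf a (gpow Gf b M) = gpow Gf (a + b) M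
  | a, 0, M => rfl
  | a, b+1, M => by
      rw [Nat.add_succ]
      exact gpow_add Gf a b (Gf.obj M)

lemma gpow_add' (Gf : A ⥤ A) (a b c : ℕ) (h : a + b = c) (M : A) :
    gpow Gf a (gpow Gf b M) = gpow Gf c M := by subst h; exact gpow_add Gf a b M

/-- `tpow G t n` is the component family of `t⁽ⁿ⁺¹⁾`, where `t⁽¹⁾ = t` and
`t⁽ⁿ⁺¹⁾ = (t⁽ⁿ⁾)_G ∘ Gⁿ(t)`. -/
def tpow (Gf : A ⥤ A) (t : Gf ⋙ Gf ⟶ Gf ⋙ Gf) :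
    (n : ℕ) → (M : A) → (gpow Gf (n+2) M ⟶ gpow Gf (n+2) M)
  | 0, M => t.app M
  | n+1, M => gmap Gf (n+1) (t.app M) ≫ tpow Gf t n (Gf.obj M)


section Aux
variable (Gf : A ⥤ A) (t : Gf ⋙ Gf ⟶ Gf ⋙ Gf)

lemma gmap_comp : ∀ (n : ℕ) {X Y Z : A} (f : X ⟶ Y) (g : Y ⟶ Z),
    gmap Gf n (f ≫ g) = gmap Gf n f ≫ gmap Gf n g
  | 0, _, _, _, f, g => rfl
  | n+1, _, _, _, f, g => by
      show gmap Gf n (Gf.map (f ≫ g)) = _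
      rw [Gf.map_comp]; exact gmap_comp n _ _

lemma gmap_id : ∀ (n : ℕ) (X : A), gmap Gf n (𝟙 X) = 𝟙 (gpow Gf n X)
  | 0, _ => rfl
  | n+1, X => by
      show gmap Gf n (Gf.map (𝟙 X)) = _
      rw [Gf.map_id]; exact gmap_id n _

lemma gmap_eqToHom (n : ℕ) {X Y : A} (h : X = Y) :
    gmap Gf n (eqToHom h) = eqToHom (by rw [h]) := by
  subst h; rw [eqToHom_refl, gmap_id, eqToHom_refl]

lemma gmap_congr {a b : ℕ} (h : a = b) {X Y : A} (f : X ⟶ Y)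
    (h1 : gpow Gf b X = gpow Gf a X) (h2 : gpow Gf a Y = gpow Gf b Y) :
    gmap Gf b f = eqToHom h1 ≫ gmap Gf a f ≫ eqToHom h2 := by
  subst h; simp

lemma gmap_gmap : ∀ (a b : ℕ) {X Y : A} (f : X ⟶ Y)
    (h1 : gpow Gf a (gpow Gf b X) = gpow Gf (a+b) X)
    (h2 : gpow Gf a (gpow Gf b Y) = gpow Gf (a+b) Y),
    gmap Gf a (gmap Gf b f) = eqToHom h1 ≫ gmap Gf (a+b) f ≫ eqToHom h2.symm
  | a, 0, _, _, f, h1, h2 => by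
      show gmap Gf a f = eqToHom rfl ≫ gmap Gf (a+0) f ≫ eqToHom rfl
      simp
  | a, b+1, _, _, f, h1, h2 => by
      show gmap Gf a (gmap Gf b (Gf.map f)) = _
      exact gmap_gmap a b (Gf.map f) h1 h2

lemma app_conj {X Y : A} (h : X = Y)
    (h1 : Gf.obj (Gf.obj Y) = Gf.obj (Gf.obj X)) (h2 : Gf.obj (Gf.obj X) = Gf.obj (Gf.obj Y)) :
    t.app Y = eqToHom h1 ≫ t.app X ≫ eqToHom h2 := by
  subst h; simp

lemma gpow_comp_eq (i j n : ℕ) (h : i + j + 2 = n) (M : A) :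
    gpow Gf i (gpow Gf 2 (gpow Gf j M)) = gpow Gf n M := by
  rw [gpow_add Gf 2 j M, gpow_add' Gf i (2+j) n (by omega)]

def sig (n i j : ℕ) (h : i + j + 2 = n) (M : A) : gpow Gf n M ⟶ gpow Gf n M :=
  eqToHom (gpow_comp_eq Gf i j n h M).symm ≫ gmap Gf i (t.app (gpow Gf j M)) ≫
    eqToHom (gpow_comp_eq Gf i j n h M)

lemma gmap_conj_eq (i : ℕ) {X X' N : A} (u : X ⟶ X) (u' : X' ⟶ X') (hx : X = X')
    (hu : u = eqToHom hx ≫ u' ≫ eqToHom hx.symm)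
    (ha : gpow Gf i X = N) (ha' : gpow Gf i X' = N) :
    eqToHom ha.symm ≫ gmap Gf i u ≫ eqToHom ha =
      eqToHom ha'.symm ≫ gmap Gf i u' ≫ eqToHom ha' := by
  subst hx; simp at hu; subst hu; rfl

lemma conj_comp (i : ℕ) {X Y N : A} (u : X ⟶ X) (v : Y ⟶ Y) (hxy : X = Y)
    (ha : gpow Gf i X = N) (hb : gpow Gf i Y = N) :
    (eqToHom ha.symm ≫ gmap Gf i u ≫ eqToHom ha) ≫
      (eqToHom hb.symm ≫ gmap Gf i v ≫ eqToHom hb) =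
    eqToHom ha.symm ≫ gmap Gf i (u ≫ eqToHom hxy ≫ v ≫ eqToHom hxy.symm) ≫ eqToHom ha := by
  subst hxy
  simp [gmap_comp]

lemma aux_comm {P Q X1 X2 : A} (T N : Q ⟶ Q) (hTN : T ≫ N = N ≫ T) (a : P = Q) (b : Q = P)
    (hx : P = Q) (c : Q = P) (d : Q = X1) (e : X1 = Q) (f : Q = X2) (g : X2 = Q) (h' : Q = P) :
    (eqToHom a ≫ T ≫ eqToHom b) ≫ eqToHom hx ≫ N ≫ eqToHom c =
      eqToHom hx ≫ (N ≫ eqToHom d ≫ (eqToHom e ≫ T ≫ eqToHom f) ≫ eqToHom g) ≫ eqToHom h' := by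
  subst a; subst d; subst f; simp [reassoc_of% hTN]
  exact hTN

lemma aux_braid {P Q R1 R2 R3 : A} (u T : P ⟶ P) (h : u ≫ T ≫ u = T ≫ u ≫ T)
    (hx : P = Q) (p1 : Q = P) (p2 : P = R1) (p3 : R1 = P) (p4 : Q = P) (p5 : P = R2)
    (p6 : R2 = P) (p7 : Q = P) (p8 : P = R3) (p9 : R3 = P) :
    u ≫ (eqToHom hx ≫ (eqToHom p1 ≫ T ≫ eqToHom p2) ≫ eqToHom p3) ≫ u =
      eqToHom hx ≫ ((eqToHom p4 ≫ T ≫ eqToHom p5) ≫ eqToHom p6) ≫ u ≫ eqToHom hx ≫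
        (eqToHom p7 ≫ T ≫ eqToHom p8) ≫ eqToHom p9 := by
  subst hx; subst p2; subst p5; subst p8
  simpa using h

lemma aux_three {W X Y Z V : A} (G : X ⟶ Y) (a : W = X) (b : Y = Z) (F2 : Z = V) (c : W = X)
    (d : Y = V) : eqToHom a ≫ (G ≫ eqToHom b) ≫ eqToHom F2 = eqToHom c ≫ G ≫ eqToHom d := by
  simp

lemma aux_four {W X Y Z V U : A} (A1 : X ⟶ Y) (B1 : Y ⟶ Z) (F1 : W = X) (F2 : Z = V)
    (G2 : Y = U) (e : U = Y) :
    eqToHom F1 ≫ A1 ≫ B1 ≫ eqToHom F2 =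
      eqToHom F1 ≫ A1 ≫ eqToHom G2 ≫ eqToHom e ≫ B1 ≫ eqToHom F2 := by
  simp

lemma aux_five {W X Y Z V : A} (G : X ⟶ Y) (a : W = X) (b : Y = Z) (F2 : Z = V) (c : W = X)
    (d : Y = V) : eqToHom a ≫ G ≫ eqToHom b ≫ eqToHom F2 = eqToHom c ≫ G ≫ eqToHom d := by
  simp

/-- σ in degree n with index i+1 seen as a conjugated `gmap i`. -/
lemma sig_succ (n i j : ℕ) (h : (i+1) + j + 2 = n) (M : A)
    (F : gpow Gf i (Gf.obj (gpow Gf 2 (gpow Gf j M))) = gpow Gf n M) :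
    sig Gf t n (i+1) j h M =
      eqToHom F.symm ≫ gmap Gf i (Gf.map (t.app (gpow Gf j M))) ≫ eqToHom F := rfl

/-- σ with index i+d+2 seen as a conjugated `gmap i`. -/
lemma sig_hi (n i d k : ℕ) (h2 : (i+d+2) + k + 2 = n) (M : A)
    (F : gpow Gf i (gpow Gf 2 (gpow Gf d (gpow Gf 2 (gpow Gf k M)))) = gpow Gf n M) :
    sig Gf t n (i+d+2) k h2 M =
      eqToHom F.symm ≫ gmap Gf i (gmap Gf 2 (gmap Gf d (t.app (gpow Gf k M)))) ≫ eqToHom F := by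
  erw [gmap_gmap Gf 2 d _ (gpow_add Gf 2 d _) (gpow_add Gf 2 d _)]
  rw [gmap_comp, gmap_comp, gmap_eqToHom, gmap_eqToHom]
  erw [gmap_gmap Gf i (2+d) _ (gpow_add Gf i (2+d) _) (gpow_add Gf i (2+d) _)]
  erw [gmap_congr Gf (show i+d+2 = i+(2+d) by omega) (t.app (gpow Gf k M))
    (by rw [show i+(2+d) = i+d+2 by omega]) (by rw [show i+(2+d) = i+d+2 by omega])]
  simp only [sig, Category.assoc, eqToHom_trans, eqToHom_trans_assoc, eqToHom_refl,
    Category.id_comp, Category.comp_id]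
  erw [Category.assoc, Category.assoc, Category.assoc, eqToHom_trans, eqToHom_trans,
    eqToHom_trans, eqToHom_trans_assoc]
  rfl

end Aux

section Rel
variable (Gf : A ⥤ A) (t : Gf ⋙ Gf ⟶ Gf ⋙ Gf)

lemma conj_braid (i : ℕ) {X Y N : A} (u : X ⟶ X) (v : Y ⟶ Y) (hxy : X = Y)
    (ha : gpow Gf i X = N) (hb : gpow Gf i Y = N)
    (core : u ≫ (eqToHom hxy ≫ v ≫ eqToHom hxy.symm) ≫ u =
      (eqToHom hxy ≫ v ≫ eqToHom hxy.symm) ≫ u ≫ (eqToHom hxy ≫ v ≫ eqToHom hxy.symm)) :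
    (eqToHom ha.symm ≫ gmap Gf i u ≫ eqToHom ha) ≫
      (eqToHom hb.symm ≫ gmap Gf i v ≫ eqToHom hb) ≫
      (eqToHom ha.symm ≫ gmap Gf i u ≫ eqToHom ha) =
    (eqToHom hb.symm ≫ gmap Gf i v ≫ eqToHom hb) ≫
      (eqToHom ha.symm ≫ gmap Gf i u ≫ eqToHom ha) ≫
      (eqToHom hb.symm ≫ gmap Gf i v ≫ eqToHom hb) := by
  subst hxy
  simp only [eqToHom_refl, Category.id_comp, Category.comp_id] at core
  have h3 : gmap Gf i u ≫ gmap Gf i v ≫ gmap Gf i u =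
      gmap Gf i v ≫ gmap Gf i u ≫ gmap Gf i v := by
    simpa [gmap_comp] using congrArg (gmap Gf i) core
  simp only [Category.assoc, eqToHom_trans_assoc, eqToHom_refl, Category.id_comp]
  rw [reassoc_of% h3]

lemma sig_comm (n i d k : ℕ) (h1 : i + (d+k+2) + 2 = n) (h2 : (i+d+2) + k + 2 = n) (M : A) :
    sig Gf t n i (d+k+2) h1 M ≫ sig Gf t n (i+d+2) k h2 M =
      sig Gf t n (i+d+2) k h2 M ≫ sig Gf t n i (d+k+2) h1 M := by
  have F : gpow Gf i (gpow Gf 2 (gpow Gf d (gpow Gf 2 (gpow Gf k M)))) = gpow Gf n M := by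
    rw [gpow_add Gf 2 k M, gpow_add Gf d (2+k) M, gpow_add Gf 2 (d+(2+k)) M]
    exact gpow_add' Gf i _ n (by omega) M
  rw [sig_hi Gf t n i d k h2 M F]
  have hD : gpow Gf d (gpow Gf 2 (gpow Gf k M)) = gpow Gf (d+k+2) M := by
    rw [gpow_add Gf 2 k M]; exact gpow_add' Gf d (2+k) (d+k+2) (by omega) M
  have hx : gpow Gf 2 (gpow Gf (d+k+2) M) = gpow Gf 2 (gpow Gf d (gpow Gf 2 (gpow Gf k M))) := by
    rw [hD]
  simp only [sig]
  erw [conj_comp Gf i _ _ hx (gpow_comp_eq Gf i (d+k+2) n h1 M) F,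
    conj_comp Gf i _ _ hx.symm F (gpow_comp_eq Gf i (d+k+2) n h1 M)]
  refine gmap_conj_eq Gf i _ _ hx ?_ _ _
  rw [app_conj Gf t hD (by rw [hD]) (by rw [hD])]
  simp only [Functor.comp_obj, Category.assoc, eqToHom_trans, eqToHom_trans_assoc,
    eqToHom_refl, Category.id_comp, Category.comp_id]
  have nat : t.app (gpow Gf d (gpow Gf 2 (gpow Gf k M))) ≫
        gmap Gf 2 (gmap Gf d (t.app (gpow Gf k M))) =
      gmap Gf 2 (gmap Gf d (t.app (gpow Gf k M))) ≫
        t.app (gpow Gf d (gpow Gf 2 (gpow Gf k M))) :=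
    (t.naturality (gmap Gf d (t.app (gpow Gf k M)))).symm
  exact aux_comm _ _ nat _ _ _ _ _ _ _ _ _

lemma sig_braid
    (hqybe : ∀ M : A, Gf.map (t.app M) ≫ t.app (Gf.obj M) ≫ Gf.map (t.app M) =
      t.app (Gf.obj M) ≫ Gf.map (t.app M) ≫ t.app (Gf.obj M))
    (n i j : ℕ) (h1 : (i+1) + j + 2 = n) (h2 : i + (j+1) + 2 = n) (M : A) :
    sig Gf t n (i+1) j h1 M ≫ sig Gf t n i (j+1) h2 M ≫ sig Gf t n (i+1) j h1 M =
      sig Gf t n i (j+1) h2 M ≫ sig Gf t n (i+1) j h1 M ≫ sig Gf t n i (j+1) h2 M := by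
  have F : gpow Gf i (Gf.obj (gpow Gf 2 (gpow Gf j M))) = gpow Gf n M := by
    show gpow Gf i (gpow Gf 3 (gpow Gf j M)) = gpow Gf n M
    rw [gpow_add Gf 3 j M]; exact gpow_add' Gf i (3+j) n (by omega) M
  rw [sig_succ Gf t n i j h1 M F]
  have hY := gpow_succ_out Gf j M
  have hx : Gf.obj (gpow Gf 2 (gpow Gf j M)) = gpow Gf 2 (gpow Gf (j+1) M) := by
    rw [hY]; rfl
  simp only [sig]
  refine conj_braid Gf i _ _ hx F (gpow_comp_eq Gf i (j+1) n h2 M) ?_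
  rw [app_conj Gf t hY.symm (by rw [hY]) (by rw [hY])]
  simp only [Functor.comp_obj, Category.assoc, eqToHom_trans, eqToHom_trans_assoc,
    eqToHom_refl, Category.id_comp, Category.comp_id]
  exact aux_braid _ _ (hqybe (gpow Gf j M)) _ _ _ _ _ _ _ _ _ _

end Rel

section Words
variable (Gf : A ⥤ A) (t : Gf ⋙ Gf ⟶ Gf ⋙ Gf)

/-- descending word σ_{i+len} ≫ σ_{i+len-1} ≫ ⋯ ≫ σ_i in degree n. -/
def run : (len n i j : ℕ) → (h : i + len + j + 2 = n) → (M : A) → (gpow Gf n M ⟶ gpow Gf n M)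
  | 0, n, i, j, h, M => sig Gf t n i j (by omega) M
  | len+1, n, i, j, h, M =>
      sig Gf t n (i+len+1) j (by omega) M ≫ run len n i (j+1) (by omega) M

lemma sig_congr (n i i' j j' : ℕ) (ei : i = i') (ej : j = j')
    (h : i+j+2 = n) (h' : i'+j'+2 = n) (M : A) :
    sig Gf t n i j h M = sig Gf t n i' j' h' M := by subst ei; subst ej; rfl

lemma run_congr (len n i i' j j' : ℕ) (ei : i = i') (ej : j = j')
    (h : i+len+j+2 = n) (h' : i'+len+j'+2 = n) (M : A) :
    run Gf t len n i j h M = run Gf t len n i' j' h' M := by subst ei; subst ej; rfl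

lemma conj_id {X : A} (p q : X = X) (f : X ⟶ X) : eqToHom p ≫ f ≫ eqToHom q = f := by simp

lemma run_shift : ∀ (len n i j : ℕ) (h : i+len+j+2 = n) (h' : i+len+(j+1)+2 = n+1) (M : A),
    run Gf t len n i j h (Gf.obj M) = run Gf t len (n+1) i (j+1) h' M
  | 0, n, i, j, h, h', M => rfl
  | len+1, n, i, j, h, h', M => by
      show sig Gf t (n+1) (i+len+1) (j+1) (by omega) M ≫
          run Gf t len n i (j+1) (by omega) (Gf.obj M) = _
      rw [run_shift len n i (j+1) (by omega) (by omega) M]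
      rfl

lemma tpow_eq_run : ∀ (k : ℕ) (M : A), tpow Gf t k M = run Gf t k (k+2) 0 0 (by omega) M
  | 0, M => (conj_id _ _ _).symm
  | k+1, M => by
      show gmap Gf (k+1) (t.app M) ≫ tpow Gf t k (Gf.obj M) = _
      rw [tpow_eq_run k (Gf.obj M)]
      rw [run_shift Gf t k (k+2) 0 0 (by omega) (by omega) M]
      show _ = sig Gf t (k+3) (0+k+1) 0 (by omega) M ≫ run Gf t k (k+3) 0 1 (by omega) M
      rw [sig_congr Gf t (k+3) (0+k+1) (k+1) 0 0 (by omega) rfl (by omega) (by omega) M]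
      congr 1
      exact (conj_id _ _ _).symm

end Words

section BraidWords
variable (Gf : A ⥤ A) (t : Gf ⋙ Gf ⟶ Gf ⋙ Gf)

lemma sig_comm' (n a b ja jb : ℕ) (hab : a + 2 ≤ b) (ha : a+ja+2 = n) (hb : b+jb+2 = n) (M : A) :
    sig Gf t n a ja ha M ≫ sig Gf t n b jb hb M =
      sig Gf t n b jb hb M ≫ sig Gf t n a ja ha M := by
  obtain ⟨d, rfl⟩ : ∃ d, b = a+d+2 := ⟨b-a-2, by omega⟩
  rw [sig_congr Gf t n a a ja (d+jb+2) rfl (by omega) ha (by omega) M]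
  exact sig_comm Gf t n a d jb (by omega) hb M

lemma sig_braid' (hqybe : ∀ M : A, Gf.map (t.app M) ≫ t.app (Gf.obj M) ≫ Gf.map (t.app M) =
      t.app (Gf.obj M) ≫ Gf.map (t.app M) ≫ t.app (Gf.obj M))
    (n a ja jb : ℕ) (ha : (a+1)+ja+2 = n) (hb : a+jb+2 = n) (M : A) :
    sig Gf t n (a+1) ja ha M ≫ sig Gf t n a jb hb M ≫ sig Gf t n (a+1) ja ha M =
      sig Gf t n a jb hb M ≫ sig Gf t n (a+1) ja ha M ≫ sig Gf t n a jb hb M := by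
  rw [sig_congr Gf t n a a jb (ja+1) rfl (by omega) hb (by omega) M]
  exact sig_braid Gf t hqybe n a ja ha (by omega) M

/-- a word with top index len commutes with a generator of index ≥ len + 2 -/
lemma run_low_comm : ∀ (len n j b jb : ℕ) (h : 0+len+j+2 = n) (hb : b+jb+2 = n)
    (hgap : len+2 ≤ b) (M : A),
    run Gf t len n 0 j h M ≫ sig Gf t n b jb hb M =
      sig Gf t n b jb hb M ≫ run Gf t len n 0 j h M
  | 0, n, j, b, jb, h, hb, hgap, M => by
      show sig Gf t n 0 j (by omega) M ≫ _ = _ ≫ sig Gf t n 0 j (by omega) M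
      exact sig_comm' Gf t n 0 b j jb (by omega) (by omega) hb M
  | len+1, n, j, b, jb, h, hb, hgap, M => by
      show (sig Gf t n (0+len+1) j (by omega) M ≫ run Gf t len n 0 (j+1) (by omega) M) ≫ _ = _
      rw [Category.assoc, run_low_comm len n (j+1) b jb (by omega) hb (by omega) M,
        ← Category.assoc,
        sig_comm' Gf t n (0+len+1) b j jb (by omega) (by omega) hb M, Category.assoc]
      rfl

lemma run_zero_eq (n i j : ℕ) (h : i+0+j+2 = n) (h' : i+j+2 = n) (M : A) :
    run Gf t 0 n i j h M = sig Gf t n i j h' M := rfl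

lemma run_zero_succ (len n j : ℕ) (h : 0+(len+1)+j+2 = n) (h1 : (len+1)+j+2 = n)
    (h2 : 0+len+(j+1)+2 = n) (M : A) :
    run Gf t (len+1) n 0 j h M =
      sig Gf t n (len+1) j h1 M ≫ run Gf t len n 0 (j+1) h2 M := by
  show sig Gf t n (0+len+1) j (by omega) M ≫ _ = _
  rw [sig_congr Gf t n (0+len+1) (len+1) j j (by omega) rfl (by omega) h1 M]

/-- main conjugation: w ≫ σ_{a+1} = σ_a ≫ w for the full descending word w = σ_m ⋯ σ_0. -/
lemma run_sig (hqybe : ∀ M : A, Gf.map (t.app M) ≫ t.app (Gf.obj M) ≫ Gf.map (t.app M) =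
      t.app (Gf.obj M) ≫ Gf.map (t.app M) ≫ t.app (Gf.obj M)) :
    ∀ (m n j a ja ja' : ℕ) (h : 0+m+j+2 = n) (ha : (a+1)+ja+2 = n) (ha' : a+ja'+2 = n)
      (ham : a+1 ≤ m) (M : A),
    run Gf t m n 0 j h M ≫ sig Gf t n (a+1) ja ha M =
      sig Gf t n a ja' ha' M ≫ run Gf t m n 0 j h M
  | 0, n, j, a, ja, ja', h, ha, ha', ham, M => by omega
  | m+1, n, j, a, ja, ja', h, ha, ha', ham, M => by
      rw [run_zero_succ Gf t m n j h (by omega) (by omega) M]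
      rcases Nat.lt_or_ge (a+1) (m+1) with hlt | hge
      · -- a+1 ≤ m : recurse into the tail
        rw [Category.assoc,
          run_sig hqybe m n (j+1) a ja ja' (by omega) ha ha' (by omega) M,
          ← Category.assoc,
          ← sig_comm' Gf t n a (m+1) ja' j (by omega) ha' (by omega) M,
          Category.assoc]
      · -- a = m
        obtain rfl : a = m := by omega
        obtain rfl : ja = j := by omega
        obtain rfl : ja' = ja+1 := by omega
        match a, h, ha, ha' with
        | 0, h, ha, ha' =>
          rw [run_zero_eq Gf t n 0 (ja+1) (by omega) (by omega) M, Category.assoc]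
          rw [sig_congr Gf t n (0+1) (0+1) ja ja rfl rfl (by omega) ha M,
            sig_congr Gf t n 0 0 (ja+1) (ja+1) rfl rfl (by omega) ha' M]
          exact sig_braid' Gf t hqybe n 0 ja (ja+1) ha ha' M
        | a+1, h, ha, ha' =>
          rw [run_zero_succ Gf t a n (ja+1) (by omega) (by omega) (by omega) M]
          simp only [Category.assoc]
          rw [run_low_comm Gf t a n (ja+2) (a+1+1) ja (by omega) ha (by omega) M]
          rw [sig_congr Gf t n (a+1+1) (a+1+1) ja ja rfl rfl (by omega) ha M,
            sig_congr Gf t n (a+1) (a+1) (ja+1) (ja+1) rfl rfl (by omega) ha' M]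
          rw [← Category.assoc, ← Category.assoc]
          have br := sig_braid' Gf t hqybe n (a+1) ja (ja+1) ha ha' M
          rw [show (sig Gf t n (a+1+1) ja ha M ≫ sig Gf t n (a+1) (ja+1) ha' M) ≫
              sig Gf t n (a+1+1) ja ha M =
            sig Gf t n (a+1+1) ja ha M ≫ sig Gf t n (a+1) (ja+1) ha' M ≫
              sig Gf t n (a+1+1) ja ha M by simp only [Category.assoc], br]
          rw [run_congr Gf t a n 0 0 (ja+1+1) (ja+2) rfl (by omega) (by omega) (by omega) M]
          simp only [Category.assoc]

end BraidWords

section Final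
variable (Gf : A ⥤ A) (t : Gf ⋙ Gf ⟶ Gf ⋙ Gf)

lemma run_run (hqybe : ∀ M : A, Gf.map (t.app M) ≫ t.app (Gf.obj M) ≫ Gf.map (t.app M) =
      t.app (Gf.obj M) ≫ Gf.map (t.app M) ≫ t.app (Gf.obj M)) :
    ∀ (len m n j i ju jv : ℕ) (h : 0+m+j+2 = n) (hu : (i+1)+len+ju+2 = n)
      (hv : i+len+jv+2 = n) (hm : i+1+len ≤ m) (M : A),
    run Gf t m n 0 j h M ≫ run Gf t len n (i+1) ju hu M =
      run Gf t len n i jv hv M ≫ run Gf t m n 0 j h M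
  | 0, m, n, j, i, ju, jv, h, hu, hv, hm, M => by
      rw [run_zero_eq Gf t n (i+1) ju hu (by omega) M,
        run_zero_eq Gf t n i jv hv (by omega) M]
      exact run_sig Gf t hqybe m n j i ju jv h (by omega) (by omega) (by omega) M
  | len+1, m, n, j, i, ju, jv, h, hu, hv, hm, M => by
      show run Gf t m n 0 j h M ≫
          (sig Gf t n (i+1+len+1) ju (by omega) M ≫ run Gf t len n (i+1) (ju+1) (by omega) M) =
        (sig Gf t n (i+len+1) jv (by omega) M ≫ run Gf t len n i (jv+1) (by omega) M) ≫
          run Gf t m n 0 j h M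
      rw [sig_congr Gf t n (i+1+len+1) ((i+len+1)+1) ju ju (by omega) rfl (by omega)
        (by omega) M]
      rw [← Category.assoc,
        run_sig Gf t hqybe m n j (i+len+1) ju jv h (by omega) (by omega) (by omega) M,
        Category.assoc,
        run_run hqybe len m n j i (ju+1) (jv+1) h (by omega) (by omega) (by omega) M,
        ← Category.assoc]

lemma tpow_conj (l : ℕ) {X Y : A} (hxy : X = Y)
    (h1 : gpow Gf (l+2) Y = gpow Gf (l+2) X) (h2 : gpow Gf (l+2) X = gpow Gf (l+2) Y) :
    tpow Gf t l Y = eqToHom h1 ≫ tpow Gf t l X ≫ eqToHom h2 := by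
  subst hxy; simp

lemma sig_head (n p l q : ℕ) (h : (p+l+1)+q+2 = n) (M : A)
    (F1 : gpow Gf n M = gpow Gf p (gpow Gf (l+1) (gpow Gf 2 (gpow Gf q M))))
    (F2 : gpow Gf p (gpow Gf (l+1) (gpow Gf 2 (gpow Gf q M))) = gpow Gf n M) :
    eqToHom F1 ≫ gmap Gf p (gmap Gf (l+1) (t.app (gpow Gf q M))) ≫ eqToHom F2 =
      sig Gf t n (p+l+1) q h M := by
  erw [gmap_gmap Gf p (l+1) _ (gpow_add Gf p (l+1) _) (gpow_add Gf p (l+1) _)]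
  erw [gmap_congr Gf (show p+l+1 = p+(l+1) by omega) (t.app (gpow Gf q M))
    (by rw [show p+(l+1) = p+l+1 by omega]) (by rw [show p+(l+1) = p+l+1 by omega])]
  simp only [sig, Category.assoc, eqToHom_trans, eqToHom_trans_assoc, eqToHom_refl,
    Category.id_comp, Category.comp_id]
  exact aux_three _ _ _ _ _ _

lemma gmap_tpow : ∀ (l p q n : ℕ) (h : p+l+q+2 = n) (M : A)
    (F1 : gpow Gf n M = gpow Gf p (gpow Gf (l+2) (gpow Gf q M)))
    (F2 : gpow Gf p (gpow Gf (l+2) (gpow Gf q M)) = gpow Gf n M),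
    eqToHom F1 ≫ gmap Gf p (tpow Gf t l (gpow Gf q M)) ≫ eqToHom F2 =
      run Gf t l n p q (by omega) M
  | 0, p, q, n, h, M, F1, F2 => by
      rw [run_zero_eq Gf t n p q (by omega) (by omega) M]
      rfl
  | l+1, p, q, n, h, M, F1, F2 => by
      have G2 : gpow Gf p (gpow Gf (l+1) (gpow Gf 2 (gpow Gf q M))) = gpow Gf n M := by
        rw [gpow_add Gf 2 q M, gpow_add Gf (l+1) (2+q) M]
        exact gpow_add' Gf p _ n (by omega) M
      have step1 : eqToHom F1 ≫ gmap Gf p (tpow Gf t (l+1) (gpow Gf q M)) ≫ eqToHom F2 =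
          (eqToHom F1 ≫ gmap Gf p (gmap Gf (l+1) (t.app (gpow Gf q M))) ≫ eqToHom G2) ≫
          (eqToHom G2.symm ≫ gmap Gf p (tpow Gf t l (Gf.obj (gpow Gf q M))) ≫ eqToHom F2) := by
        show eqToHom F1 ≫ gmap Gf p (gmap Gf (l+1) (t.app (gpow Gf q M)) ≫
            tpow Gf t l (Gf.obj (gpow Gf q M))) ≫ eqToHom F2 = _
        erw [gmap_comp]
        simp only [Category.assoc, eqToHom_trans_assoc, eqToHom_refl, Category.id_comp]
        exact aux_four _ _ _ _ _ _
      rw [step1]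
      have hsh : gpow Gf (q+1) M = Gf.obj (gpow Gf q M) := gpow_succ_out Gf q M
      have step2 : (eqToHom G2.symm ≫ gmap Gf p (tpow Gf t l (Gf.obj (gpow Gf q M))) ≫
            eqToHom F2) =
          run Gf t l n p (q+1) (by omega) M := by
        rw [tpow_conj Gf t l hsh (by rw [hsh]) (by rw [hsh])]
        erw [gmap_comp, gmap_comp, gmap_eqToHom, gmap_eqToHom]
        have F1' : gpow Gf n M = gpow Gf p (gpow Gf (l+2) (gpow Gf (q+1) M)) := by
          rw [hsh]; exact G2.symm
        have F2' : gpow Gf p (gpow Gf (l+2) (gpow Gf (q+1) M)) = gpow Gf n M := by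
          rw [hsh]; exact G2
        rw [← gmap_tpow l p (q+1) n (by omega) M F1' F2']
        simp only [Category.assoc, eqToHom_trans, eqToHom_trans_assoc, eqToHom_refl,
          Category.id_comp, Category.comp_id]
        exact aux_five _ _ _ _ _ _
      rw [step2]
      refine (congrArg (fun x => x ≫ run Gf t l n p (q+1) (by omega) M)
        (sig_head Gf t n p l q (by omega) M F1 G2)).trans ?_
      show sig Gf t n (p+l+1) q (by omega) M ≫ run Gf t l n p (q+1) (by omega) M = _
      rfl

end Final

section Assemble
variable (Gf : A ⥤ A) (t : Gf ⋙ Gf ⟶ Gf ⋙ Gf)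

lemma tpow_braid_clean
    (hqybe : ∀ M : A, Gf.map (t.app M) ≫ t.app (Gf.obj M) ≫ Gf.map (t.app M) =
      t.app (Gf.obj M) ≫ Gf.map (t.app M) ≫ t.app (Gf.obj M))
    (p' l' : ℕ) (M : A)
    (E1 : gpow Gf (p'+l'+4) M = gpow Gf (p'+1) (gpow Gf (l'+2) (gpow Gf 1 M)))
    (E2 : gpow Gf (p'+1) (gpow Gf (l'+2) (gpow Gf 1 M)) = gpow Gf (p'+l'+4) M)
    (E3 : gpow Gf (p'+l'+4) M = gpow Gf p' (gpow Gf (l'+2) (gpow Gf 2 M)))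
    (E4 : gpow Gf p' (gpow Gf (l'+2) (gpow Gf 2 M)) = gpow Gf (p'+l'+4) M) :
    tpow Gf t (p' + l' + 2) M ≫
        eqToHom E1 ≫ gmap Gf (p'+1) (tpow Gf t l' (gpow Gf 1 M)) ≫ eqToHom E2 =
      (eqToHom E3 ≫ gmap Gf p' (tpow Gf t l' (gpow Gf 2 M)) ≫ eqToHom E4) ≫
        tpow Gf t (p' + l' + 2) M := by
  rw [tpow_eq_run Gf t (p'+l'+2) M]
  rw [show eqToHom E1 ≫ gmap Gf (p'+1) (tpow Gf t l' (gpow Gf 1 M)) ≫ eqToHom E2 =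
      run Gf t l' (p'+l'+4) (p'+1) 1 (by omega) M from
    gmap_tpow Gf t l' (p'+1) 1 (p'+l'+4) (by omega) M E1 E2]
  rw [show eqToHom E3 ≫ gmap Gf p' (tpow Gf t l' (gpow Gf 2 M)) ≫ eqToHom E4 =
      run Gf t l' (p'+l'+4) p' 2 (by omega) M from
    gmap_tpow Gf t l' p' 2 (p'+l'+4) (by omega) M E3 E4]
  exact run_run Gf t hqybe l' (p'+l'+2) (p'+l'+4) 0 p' 1 2 (by omega) (by omega)
    (by omega) (by omega) M

end Assemble


/-- if `t` satisfies the QYBE then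
`Gᵖ((t⁽ˡ⁻¹⁾)_G) ∘ t⁽ᵖ⁺ˡ⁾ = t⁽ᵖ⁺ˡ⁾ ∘ Gᵖ⁻¹((t⁽ˡ⁻¹⁾)_{G²})` for all `l ≥ 2`, `p ≥ 1`
(stated with `l = l'+2`, `p = p'+1`, and `tpow Gf t k = t⁽ᵏ⁺¹⁾`). -/
theorem tpow_braid_general (Gf : A ⥤ A) (t : Gf ⋙ Gf ⟶ Gf ⋙ Gf)
    (hqybe : ∀ M : A, Gf.map (t.app M) ≫ t.app (Gf.obj M) ≫ Gf.map (t.app M) =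
      t.app (Gf.obj M) ≫ Gf.map (t.app M) ≫ t.app (Gf.obj M))
    (p' l' : ℕ) (M : A) :
    tpow Gf t (p' + l' + 2) M ≫
        eqToHom (show gpow Gf (p'+l'+4) M = gpow Gf (p'+1) (gpow Gf (l'+2) (Gf.obj M)) from
          (gpow_add' Gf (p'+1) (l'+2) (p'+l'+3) (by omega) (Gf.obj M)).symm) ≫
        gmap Gf (p'+1) (tpow Gf t l' (Gf.obj M)) ≫
        eqToHom (show gpow Gf (p'+1) (gpow Gf (l'+2) (Gf.obj M)) = gpow Gf (p'+l'+4) M from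
          gpow_add' Gf (p'+1) (l'+2) (p'+l'+3) (by omega) (Gf.obj M)) =
      (eqToHom (show gpow Gf (p'+l'+4) M = gpow Gf p' (gpow Gf (l'+2) (Gf.obj (Gf.obj M))) from
          (gpow_add' Gf p' (l'+2) (p'+l'+2) (by omega) (Gf.obj (Gf.obj M))).symm) ≫
        gmap Gf p' (tpow Gf t l' (Gf.obj (Gf.obj M))) ≫
        eqToHom (show gpow Gf p' (gpow Gf (l'+2) (Gf.obj (Gf.obj M))) = gpow Gf (p'+l'+4) M from
          gpow_add' Gf p' (l'+2) (p'+l'+2) (by omega) (Gf.obj (Gf.obj M)))) ≫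
      tpow Gf t (p' + l' + 2) M := by
  exact tpow_braid_clean Gf t hqybe p' l' M _ _ _ _
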